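/- For every even integer k ≥ 64 with k ≡ 0 (mod 4), setting ℓ = ⌊k/12⌋, one has ((2π)^k·k/(k!·ζ(k)))·∑_{m=1}^{ℓ} σ_{k-1}(m) ≤ ζ(63)·√(k/(2π))·(2πe/12)^k < 1.5^k. -/

import Mathlib

open Real

/-- The Riemann zeta function for real arguments, as a sum over positive integers. -/
noncomputable def zetaR (s : ℝ) : ℝ := ∑' n : ℕ+, (1 : ℝ) / (n : ℝ) ^ s

lemma summable_nat_rpow' (s : ℝ) (hs : 2 ≤ s) :
    Summable (fun n : ℕ => (1:ℝ)/(n:ℝ)^s) := by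
  rw [Real.summable_one_div_nat_rpow]; linarith

lemma summable_pnat_rpow' (s : ℝ) (hs : 2 ≤ s) :
    Summable (fun n : ℕ+ => (1:ℝ)/(n:ℝ)^s) := by
  have := (summable_nat_rpow' s hs).subtype {n : ℕ | 0 < n}
  exact this.congr (fun n => by norm_cast)

lemma zetaR_eq (s : ℝ) (hs : 2 ≤ s) : zetaR s = ∑' n : ℕ, (1:ℝ)/(n:ℝ)^s := by
  rw [zetaR, ← tsum_subtype_eq_of_support_subset (s := {n : ℕ | 0 < n})]
  · rfl
  · intro n hn
    simp only [Function.mem_support] at hn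
    simp only [Set.mem_setOf_eq]
    by_contra h
    push_neg at h
    interval_cases n
    simp [Real.zero_rpow (by linarith : s ≠ 0)] at hn

lemma one_le_zetaR (s : ℝ) (hs : 2 ≤ s) : 1 ≤ zetaR s := by
  have := Summable.le_tsum (summable_pnat_rpow' s hs) 1 (fun n _ => by positivity)
  simpa [zetaR] using this

lemma zetaR_anti {s t : ℝ} (hs : 2 ≤ s) (hst : s ≤ t) : zetaR t ≤ zetaR s := by
  refine Summable.tsum_le_tsum (fun n => ?_) (summable_pnat_rpow' t (hs.trans hst))
    (summable_pnat_rpow' s hs)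
  gcongr
  exact_mod_cast n.one_le

lemma zetaR_two_eq : zetaR 2 = π^2/6 := by
  rw [zetaR_eq 2 le_rfl, ← hasSum_zeta_two.tsum_eq]
  congr 1; funext n
  rw [Real.rpow_two]

lemma zetaR_le_two (s : ℝ) (hs : 2 ≤ s) : zetaR s ≤ 2 := by
  have h1 : zetaR s ≤ zetaR 2 := zetaR_anti le_rfl hs
  have h2 := zetaR_two_eq
  have : π ≤ 3.15 := by linarith [Real.pi_lt_d2]
  nlinarith [Real.pi_pos]

lemma sqrt_pi_le_stirlingSeq (n : ℕ) (hn : 1 ≤ n) : Real.sqrt π ≤ Stirling.stirlingSeq n := by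
  obtain ⟨m, rfl⟩ := Nat.exists_eq_add_of_le hn
  have ht : Filter.Tendsto (Stirling.stirlingSeq ∘ Nat.succ) Filter.atTop (nhds (Real.sqrt π)) :=
    Stirling.tendsto_stirlingSeq_sqrt_pi.comp (Filter.tendsto_add_atTop_nat 1)
  have := Stirling.stirlingSeq'_antitone.le_of_tendsto ht m
  simpa [Nat.succ_eq_add_one, Nat.add_comm] using this

lemma factorial_lower (k : ℕ) (hk : 1 ≤ k) :
    Real.sqrt (2*π*k) * ((k:ℝ)/Real.exp 1)^k ≤ (k.factorial : ℝ) := by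
  have h := sqrt_pi_le_stirlingSeq k hk
  rw [Stirling.stirlingSeq] at h
  have hk0 : (0:ℝ) < k := by exact_mod_cast hk
  have hd : (0:ℝ) < Real.sqrt (2*k) * ((k:ℝ)/Real.exp 1)^k := by positivity
  rw [le_div_iff₀ hd] at h
  calc Real.sqrt (2*π*k) * ((k:ℝ)/Real.exp 1)^k
      = Real.sqrt π * (Real.sqrt (2*k) * ((k:ℝ)/Real.exp 1)^k) := by
        rw [show 2*π*(k:ℝ) = π * (2*k) by ring, Real.sqrt_mul pi_pos.le]; ring
    _ ≤ (k.factorial : ℝ) := h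

lemma divisors_sum_le_zetaR (m : ℕ) :
    ∑ d ∈ m.divisors, (1:ℝ)/(d:ℝ)^(63:ℝ) ≤ zetaR 63 := by
  rw [zetaR_eq 63 (by norm_num)]
  exact Summable.sum_le_tsum m.divisors (fun i _ => by positivity) (summable_nat_rpow' 63 (by norm_num))

lemma sigma_bound (k m : ℕ) (hk : 64 ≤ k) (hm : 1 ≤ m) :
    ((∑ d ∈ m.divisors, d ^ (k - 1) : ℕ) : ℝ) ≤ zetaR 63 * (m:ℝ)^(k-1) := by
  have key : (∑ d ∈ m.divisors, d ^ (k - 1) : ℕ) = ∑ d ∈ m.divisors, (m/d) ^ (k-1) :=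
    (Nat.sum_div_divisors m (· ^ (k-1))).symm
  rw [key]
  push_cast
  have step : ∀ d ∈ m.divisors, ((m/d : ℕ) : ℝ) ^ (k-1) ≤ (m:ℝ)^(k-1) * ((1:ℝ)/(d:ℝ)^(63:ℝ)) := by
    intro d hd
    obtain ⟨hdvd, hm0⟩ := Nat.mem_divisors.mp hd
    have hd1 : 1 ≤ d := Nat.one_le_iff_ne_zero.mpr (by rintro rfl; simp at hdvd; omega)
    have hdr : (1:ℝ) ≤ (d:ℝ) := by exact_mod_cast hd1
    have heq : ((m/d : ℕ) : ℝ) = (m:ℝ)/(d:ℝ) := by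
      rw [Nat.cast_div hdvd]; positivity
    have h63 : (d:ℝ)^(63:ℝ) ≤ (d:ℝ)^(k-1) := by
      have : (d:ℝ)^(63:ℝ) = (d:ℝ)^(63:ℕ) := by
        rw [← Real.rpow_natCast (d:ℝ) 63]; norm_num
      rw [this]
      exact pow_le_pow_right₀ hdr (by omega)
    rw [heq, div_pow, div_eq_mul_one_div, one_div, one_div]
    have hdpos : (0:ℝ) < (d:ℝ)^(63:ℝ) := by positivity
    gcongr
  calc ∑ d ∈ m.divisors, ((m/d : ℕ):ℝ) ^ (k-1)
      ≤ ∑ d ∈ m.divisors, (m:ℝ)^(k-1) * ((1:ℝ)/(d:ℝ)^(63:ℝ)) := Finset.sum_le_sum step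
    _ = (m:ℝ)^(k-1) * ∑ d ∈ m.divisors, (1:ℝ)/(d:ℝ)^(63:ℝ) := by rw [Finset.mul_sum]
    _ ≤ (m:ℝ)^(k-1) * zetaR 63 :=
        mul_le_mul_of_nonneg_left (divisors_sum_le_zetaR m) (by positivity)
    _ = zetaR 63 * (m:ℝ)^(k-1) := mul_comm _ _

lemma eisenstein_part2 (Z : ℝ) (hZ1 : 1 ≤ Z) (hZ2 : Z ≤ 2) :
    ∀ k : ℕ, 64 ≤ k → Z * Real.sqrt ((k:ℝ)/(2*π)) * (2*π*Real.exp 1/12)^k < 1.5^k := by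
  have hpi_lo : 3.14 < π := pi_gt_d2
  have hpi_hi : π < 3.15 := pi_lt_d2
  have he_lo : (2.7182818283 : ℝ) < Real.exp 1 := exp_one_gt_d9
  have he_hi : Real.exp 1 < 2.7182818286 := exp_one_lt_d9
  have ha_pos : (0:ℝ) < 2*π*Real.exp 1/12 := by positivity
  have hpi2 : π < 3.141593 := pi_lt_d6
  have ha : 2*π*Real.exp 1/12 ≤ 1.4235 := by
    nlinarith [mul_pos (sub_pos.mpr hpi2) (sub_pos.mpr he_hi)]
  intro k hk
  induction k, hk using Nat.le_induction with
  | base =>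
    have hs : Real.sqrt ((64:ℝ)/(2*π)) < 3.3 := by
      rw [Real.sqrt_lt' (by norm_num)]
      rw [div_lt_iff₀ (by positivity)]
      nlinarith
    have h1 : Z * Real.sqrt ((64:ℝ)/(2*π)) * (2*π*Real.exp 1/12)^64
        ≤ 2 * 3.3 * 1.4235^64 := by
      have hsq : (0:ℝ) ≤ Real.sqrt ((64:ℝ)/(2*π)) := Real.sqrt_nonneg _
      have hp : (2*π*Real.exp 1/12)^64 ≤ (1.4235:ℝ)^64 :=
        pow_le_pow_left₀ ha_pos.le ha 64
      have : Z * Real.sqrt ((64:ℝ)/(2*π)) ≤ 2 * 3.3 := by nlinarith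
      nlinarith [pow_pos ha_pos 64, pow_nonneg (show (0:ℝ) ≤ 1.4235 by norm_num) 64]
    calc Z * Real.sqrt (((64:ℕ):ℝ)/(2*π)) * (2*π*Real.exp 1/12)^64
        ≤ 2 * 3.3 * 1.4235^64 := by push_cast; exact h1
      _ < 1.5^64 := by norm_num
  | succ k hk ih =>
    have hk0 : (0:ℝ) < k := by positivity
    have key : Real.sqrt (((k:ℝ)+1)/(2*π)) =
        Real.sqrt ((k:ℝ)/(2*π)) * Real.sqrt (((k:ℝ)+1)/k) := by
      rw [← Real.sqrt_mul (by positivity)]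
      congr 1
      field_simp
    have hroot : Real.sqrt (((k:ℝ)+1)/k) ≤ 1.008 := by
      rw [show (1.008:ℝ) = Real.sqrt (1.008^2) from (Real.sqrt_sq (by norm_num)).symm]
      apply Real.sqrt_le_sqrt
      rw [div_le_iff₀ hk0]
      have : (64:ℝ) ≤ k := by exact_mod_cast hk
      nlinarith
    have hc : (2*π*Real.exp 1/12) * Real.sqrt (((k:ℝ)+1)/k) ≤ 1.5 := by
      have h0 : (0:ℝ) ≤ Real.sqrt (((k:ℝ)+1)/k) := Real.sqrt_nonneg _
      nlinarith
    have hL : (0:ℝ) ≤ Z * Real.sqrt ((k:ℝ)/(2*π)) * (2*π*Real.exp 1/12)^k := by positivity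
    calc Z * Real.sqrt (((k+1:ℕ):ℝ)/(2*π)) * (2*π*Real.exp 1/12)^(k+1)
        = (Z * Real.sqrt ((k:ℝ)/(2*π)) * (2*π*Real.exp 1/12)^k) *
          ((2*π*Real.exp 1/12) * Real.sqrt (((k:ℝ)+1)/k)) := by
          push_cast
          rw [key, pow_succ]; ring
      _ ≤ (Z * Real.sqrt ((k:ℝ)/(2*π)) * (2*π*Real.exp 1/12)^k) * 1.5 :=
          mul_le_mul_of_nonneg_left hc hL
      _ < 1.5^k * 1.5 := by
          apply mul_lt_mul_of_pos_right ih (by norm_num)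
      _ = 1.5^(k+1) := (pow_succ _ _).symm

lemma eisenstein_part1 (k : ℕ) (hk : 64 ≤ k) :
    ((2 * π) ^ k * k / (k.factorial * zetaR k)) *
        ∑ m ∈ Finset.Icc 1 (k / 12), ((∑ d ∈ m.divisors, d ^ (k - 1) : ℕ) : ℝ) ≤
      zetaR 63 * Real.sqrt (k / (2 * π)) * (2 * π * Real.exp 1 / 12) ^ k := by
  have hZ1 : 1 ≤ zetaR 63 := one_le_zetaR 63 (by norm_num)
  set Z : ℝ := zetaR 63 with hZ
  have hKpos : (0:ℝ) < (k:ℝ) := by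
    have : 0 < k := by omega
    exact_mod_cast this
  set ℓ : ℕ := k / 12 with hl
  have hsum : (∑ m ∈ Finset.Icc 1 ℓ, ((∑ d ∈ m.divisors, d ^ (k - 1) : ℕ) : ℝ))
      ≤ Z * ((k:ℝ)/12)^k := by
    have h1 : ∀ m ∈ Finset.Icc 1 ℓ,
        ((∑ d ∈ m.divisors, d ^ (k - 1) : ℕ) : ℝ) ≤ Z * (ℓ:ℝ)^(k-1) := by
      intro m hm
      obtain ⟨hm1, hm2⟩ := Finset.mem_Icc.mp hm
      refine (sigma_bound k m hk hm1).trans ?_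
      have : (m:ℝ) ≤ (ℓ:ℝ) := by exact_mod_cast hm2
      have hp : (m:ℝ)^(k-1) ≤ (ℓ:ℝ)^(k-1) := pow_le_pow_left₀ (by positivity) this _
      nlinarith [pow_nonneg (show (0:ℝ) ≤ (m:ℝ) by positivity) (k-1)]
    calc (∑ m ∈ Finset.Icc 1 ℓ, ((∑ d ∈ m.divisors, d ^ (k - 1) : ℕ) : ℝ))
        ≤ ∑ _m ∈ Finset.Icc 1 ℓ, Z * (ℓ:ℝ)^(k-1) := Finset.sum_le_sum h1
      _ = (ℓ:ℝ) * (Z * (ℓ:ℝ)^(k-1)) := by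
          rw [Finset.sum_const, Nat.card_Icc]
          simp [nsmul_eq_mul]
      _ = Z * (ℓ:ℝ)^k := by
          have : (ℓ:ℝ)^(k-1) * (ℓ:ℝ) = (ℓ:ℝ)^k := by
            rw [← pow_succ]
            congr 1
            omega
          nlinarith [this]
      _ ≤ Z * ((k:ℝ)/12)^k := by
          have hle : (ℓ:ℝ) ≤ (k:ℝ)/12 := by
            rw [hl]
            exact_mod_cast Nat.cast_div_le
          have := pow_le_pow_left₀ (by positivity : (0:ℝ) ≤ (ℓ:ℝ)) hle k
          nlinarith
  have hD0 : (0:ℝ) < Real.sqrt (2*π*(k:ℝ)) * ((k:ℝ)/Real.exp 1)^k := by positivity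
  have hden : Real.sqrt (2*π*(k:ℝ)) * ((k:ℝ)/Real.exp 1)^k ≤ (k.factorial : ℝ) * zetaR (k:ℝ) := by
    have h1 := factorial_lower k (by omega)
    have h2 : 1 ≤ zetaR (k:ℝ) := one_le_zetaR _ (by exact_mod_cast (by omega : 2 ≤ k))
    have hf : (0:ℝ) < (k.factorial : ℝ) := by exact_mod_cast k.factorial_pos
    nlinarith
  have hA : (2 * π) ^ k * (k:ℝ) / (k.factorial * zetaR (k:ℝ))
      ≤ (2 * π) ^ k * (k:ℝ) / (Real.sqrt (2*π*(k:ℝ)) * ((k:ℝ)/Real.exp 1)^k) :=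
    div_le_div_of_nonneg_left (by positivity) hD0 hden
  have hS0 : (0:ℝ) ≤ ∑ m ∈ Finset.Icc 1 ℓ, ((∑ d ∈ m.divisors, d ^ (k - 1) : ℕ) : ℝ) :=
    Finset.sum_nonneg (fun m _ => by positivity)
  have hA0 : (0:ℝ) ≤ (2 * π) ^ k * (k:ℝ) / (Real.sqrt (2*π*(k:ℝ)) * ((k:ℝ)/Real.exp 1)^k) := by
    positivity
  have combined : ((2 * π) ^ k * (k:ℝ) / (k.factorial * zetaR (k:ℝ))) *
        (∑ m ∈ Finset.Icc 1 ℓ, ((∑ d ∈ m.divisors, d ^ (k - 1) : ℕ) : ℝ))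
      ≤ ((2 * π) ^ k * (k:ℝ) / (Real.sqrt (2*π*(k:ℝ)) * ((k:ℝ)/Real.exp 1)^k)) *
        (Z * ((k:ℝ)/12)^k) :=
    mul_le_mul hA hsum hS0 hA0
  refine combined.trans_eq ?_
  have hsqK : Real.sqrt (2*π*(k:ℝ)) = Real.sqrt (2*π) * Real.sqrt (k:ℝ) := by
    rw [← Real.sqrt_mul (by positivity)]
  have hsqd : Real.sqrt ((k:ℝ)/(2*π)) = Real.sqrt (k:ℝ) / Real.sqrt (2*π) := by
    rw [Real.sqrt_div hKpos.le]
  have hKsq : (k:ℝ) = Real.sqrt (k:ℝ) * Real.sqrt (k:ℝ) := (Real.mul_self_sqrt hKpos.le).symm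
  have hkey : (k:ℝ) / Real.sqrt (2*π*(k:ℝ)) = Real.sqrt ((k:ℝ)/(2*π)) := by
    rw [hsqK, hsqd]
    have h2 : Real.sqrt (2*π) ≠ 0 := by positivity
    have h3 : Real.sqrt (k:ℝ) ≠ 0 := by positivity
    rw [div_eq_div_iff (by positivity) (by positivity)]
    linear_combination Real.sqrt (2*π) * hKsq
  have hpow : ((2*π)^k * ((k:ℝ)/12)^k) / ((k:ℝ)/Real.exp 1)^k = (2*π*Real.exp 1/12)^k := by
    rw [← mul_pow, ← div_pow]
    congr 1
    field_simp
  have hs0 : Real.sqrt (2*π*(k:ℝ)) ≠ 0 := by positivity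
  have hp0 : ((k:ℝ)/Real.exp 1)^k ≠ 0 := by positivity
  calc ((2 * π) ^ k * (k:ℝ) / (Real.sqrt (2*π*(k:ℝ)) * ((k:ℝ)/Real.exp 1)^k)) *
        (Z * ((k:ℝ)/12)^k)
      = Z * ((k:ℝ) / Real.sqrt (2*π*(k:ℝ))) *
          (((2*π)^k * ((k:ℝ)/12)^k) / ((k:ℝ)/Real.exp 1)^k) := by
        field_simp
    _ = Z * Real.sqrt ((k:ℝ)/(2*π)) * (2*π*Real.exp 1/12)^k := by rw [hkey, hpow]

theorem eisenstein_partial_sum_bound (k : ℕ) (hk : 64 ≤ k) (hk4 : k % 4 = 0) :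
    ((2 * π) ^ k * k / (k.factorial * zetaR k)) *
        ∑ m ∈ Finset.Icc 1 (k / 12), ((∑ d ∈ m.divisors, d ^ (k - 1) : ℕ) : ℝ) ≤
      zetaR 63 * Real.sqrt (k / (2 * π)) * (2 * π * Real.exp 1 / 12) ^ k ∧
    zetaR 63 * Real.sqrt (k / (2 * π)) * (2 * π * Real.exp 1 / 12) ^ k < 1.5 ^ k := by
  exact ⟨eisenstein_part1 k hk,
    eisenstein_part2 (zetaR 63) (one_le_zetaR 63 (by norm_num)) (zetaR_le_two 63 (by norm_num))
      k hk⟩
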